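/- If u₀ ∈ L^∞(ℝ) satisfies 0 ≤ u₀ ≤ 1 almost everywhere, then there exists a solution u ∈ C¹([0, +∞), L^∞(ℝ)) to equation (4.1) with u(0) = u₀ such that 0 ≤ u(t) ≤ 1 holds almost everywhere for every t ∈ [0, +∞). -/

import Mathlib

open MeasureTheory Filter Topology
open scoped ENNReal NNReal

noncomputable section

/-- The convolution `(μ*u)(x) = ∫ u(x-y) dμ(y)`. -/
noncomputable def mconv (μ : Measure ℝ) (u : ℝ → ℝ) : ℝ → ℝ :=
  fun x => ∫ y, u (x - y) ∂μ

/-- A monostable nonlinearity: Lipschitz continuous, `f 0 = f 1 = 0`, `f > 0` on `(0,1)`. -/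
def MonostableF (f : ℝ → ℝ) : Prop :=
  (∃ K : NNReal, LipschitzWith K f) ∧ f 0 = 0 ∧ f 1 = 0 ∧
    ∀ u : ℝ, 0 < u → u < 1 → 0 < f u

/-- `U : I → L^∞(ℝ)` is a (continuously differentiable) solution of
`u_t = μ*u - u + f(u)` on the time interval `I`. -/
def IsSolutionOn (μ : Measure ℝ) (f : ℝ → ℝ) (I : Set ℝ)
    (U : ℝ → Lp ℝ ⊤ (volume : Measure ℝ)) : Prop :=
  ∃ D : ℝ → Lp ℝ ⊤ (volume : Measure ℝ),
    ContinuousOn D I ∧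
    (∀ t ∈ I, HasDerivWithinAt U (D t) I t) ∧
    (∀ t ∈ I, (D t : ℝ → ℝ) =ᵐ[volume]
      fun x => mconv μ (U t) x - (U t : ℝ → ℝ) x + f ((U t : ℝ → ℝ) x))

abbrev EE : Type := ↥(Lp ℝ ⊤ (volume : Measure ℝ))

def clip (s : ℝ) : ℝ := max 0 (min 1 s)

lemma clip_nonneg (s : ℝ) : 0 ≤ clip s := le_max_left _ _

lemma clip_le_one (s : ℝ) : clip s ≤ 1 := max_le zero_le_one (min_le_left _ _)

lemma clip_eq_self {s : ℝ} (h0 : 0 ≤ s) (h1 : s ≤ 1) : clip s = s := by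
  simp [clip, min_eq_right h1, max_eq_right h0]

lemma abs_clip_sub_clip (a b : ℝ) : |clip a - clip b| ≤ |a - b| := by
  have h1 : |clip a - clip b| ≤ |min 1 a - min 1 b| := by
    rw [clip, clip, max_comm 0 (min 1 a), max_comm 0 (min 1 b)]
    exact abs_max_sub_max_le_abs _ _ _
  refine h1.trans ?_
  have := abs_min_sub_min_le_max 1 a 1 b
  simpa using this

lemma lipschitz_clip : LipschitzWith 1 clip := by
  refine LipschitzWith.of_dist_le_mul fun a b => ?_
  simp only [Real.dist_eq, NNReal.coe_one, one_mul]
  exact abs_clip_sub_clip a b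

/-- a.e. bound by the `L^∞` norm. -/
lemma ae_bound_of_Linfty (v : EE) : ∀ᵐ x : ℝ ∂volume, |(v : ℝ → ℝ) x| ≤ ‖v‖ := by
  have h := MeasureTheory.ae_le_eLpNormEssSup (f := (v : ℝ → ℝ)) (μ := volume)
  have hne : eLpNorm (v : ℝ → ℝ) ⊤ volume ≠ ⊤ := Lp.eLpNorm_ne_top v
  filter_upwards [h] with x hx
  have : (‖(v : ℝ → ℝ) x‖₊ : ℝ≥0∞) ≤ eLpNorm (v : ℝ → ℝ) ⊤ volume := by
    rwa [eLpNorm_exponent_top]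
  have := ENNReal.toReal_mono hne this
  simpa [Lp.norm_def, Real.norm_eq_abs] using this

/-- norm bound from a.e. bound, for `L^∞` over a possibly infinite measure. -/
lemma Linfty_norm_le {v : EE} {C : ℝ} (hC : 0 ≤ C)
    (h : ∀ᵐ x : ℝ ∂volume, |(v : ℝ → ℝ) x| ≤ C) : ‖v‖ ≤ C := by
  have h' : ∀ᵐ x : ℝ ∂volume, ‖(v : ℝ → ℝ) x‖ ≤ C := by
    simpa [Real.norm_eq_abs] using h
  have := MeasureTheory.eLpNorm_le_of_ae_bound (p := ⊤) (μ := volume) h'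
  rw [Lp.norm_def]
  calc (eLpNorm (v : ℝ → ℝ) ⊤ volume).toReal
      ≤ (volume (Set.univ : Set ℝ) ^ ((⊤ : ℝ≥0∞).toReal)⁻¹ * ENNReal.ofReal C).toReal :=
        ENNReal.toReal_mono (by simp) this
    _ = C := by simp [ENNReal.toReal_ofReal hC]

/-- Null sets are a.e.–μ-a.e. avoided by translations. -/
lemma ae_ae_sub_not_mem (μ : Measure ℝ) [IsFiniteMeasure μ] {N : Set ℝ}
    (hN : volume N = 0) : ∀ᵐ x : ℝ ∂volume, ∀ᵐ y ∂μ, x - y ∉ N := by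
  obtain ⟨N', hNN', hN'm, hN'0⟩ := exists_measurable_superset_of_null hN
  have hmeas : Measurable fun p : ℝ × ℝ => N'.indicator (fun _ => (1 : ℝ≥0∞)) (p.1 - p.2) := by
    have : Measurable fun p : ℝ × ℝ => p.1 - p.2 := measurable_fst.sub measurable_snd
    exact (measurable_one.indicator hN'm).comp this
  have hswap := MeasureTheory.lintegral_lintegral_swap
      (μ := volume) (ν := μ)
      (f := fun x y => N'.indicator (fun _ => (1 : ℝ≥0∞)) (x - y)) hmeas.aemeasurable
  have hinner : ∀ y : ℝ, (∫⁻ x, N'.indicator (fun _ => (1:ℝ≥0∞)) (x - y) ∂volume) = 0 := by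
    intro y
    have hpre : (fun x : ℝ => x - y) ⁻¹' N' = (fun x : ℝ => x + (-y)) ⁻¹' N' := by
      simp [sub_eq_add_neg]
    calc (∫⁻ x, N'.indicator (fun _ => (1:ℝ≥0∞)) (x - y) ∂volume)
        = ∫⁻ x, ((fun x : ℝ => x - y) ⁻¹' N').indicator (fun _ => (1:ℝ≥0∞)) x ∂volume := by
          refine lintegral_congr fun x => ?_
          by_cases hx : x - y ∈ N' <;> simp [Set.indicator, hx]
      _ = volume ((fun x : ℝ => x - y) ⁻¹' N') := by
          have hm2 : MeasurableSet ((fun x : ℝ => x - y) ⁻¹' N') :=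
            hN'm.preimage (measurable_id.sub measurable_const)
          rw [lintegral_indicator hm2]
          simp
      _ = volume N' := by rw [hpre, measure_preimage_add_right]
      _ = 0 := hN'0
  have hzero : (∫⁻ x, ∫⁻ y, N'.indicator (fun _ => (1:ℝ≥0∞)) (x - y) ∂μ ∂volume) = 0 := by
    rw [hswap]
    simp [hinner]
  have hmeas2 : AEMeasurable (fun x : ℝ => ∫⁻ y, N'.indicator (fun _ => (1:ℝ≥0∞)) (x - y) ∂μ)
      volume := (Measurable.lintegral_prod_right' (f := fun p : ℝ × ℝ =>
        N'.indicator (fun _ => (1:ℝ≥0∞)) (p.1 - p.2)) hmeas).aemeasurable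
  have hae := (lintegral_eq_zero_iff' hmeas2).mp hzero
  filter_upwards [hae] with x hx
  have : μ {y : ℝ | x - y ∈ N'} = 0 := by
    have : (∫⁻ y, N'.indicator (fun _ => (1:ℝ≥0∞)) (x - y) ∂μ) = μ {y : ℝ | x - y ∈ N'} := by
      have hm : MeasurableSet {y : ℝ | x - y ∈ N'} := (hN'm.preimage (measurable_const.sub measurable_id))
      calc (∫⁻ y, N'.indicator (fun _ => (1:ℝ≥0∞)) (x - y) ∂μ)
          = ∫⁻ y, {y : ℝ | x - y ∈ N'}.indicator (fun _ => (1:ℝ≥0∞)) y ∂μ := by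
            refine lintegral_congr fun y => ?_
            by_cases hy : x - y ∈ N' <;> simp [Set.indicator, hy]
        _ = μ {y : ℝ | x - y ∈ N'} := by rw [lintegral_indicator hm]; simp
    rw [← this, hx]; simp
  have h2 : ∀ᵐ y ∂μ, x - y ∉ N' := by
    have := MeasureTheory.measure_eq_zero_iff_ae_notMem.mp this
    filter_upwards [this] with y hy
    exact hy
  filter_upwards [h2] with y hy hmem
  exact hy (hNN' hmem)

section Phi

variable (μ : Measure ℝ) (f : ℝ → ℝ) (K : ℝ≥0)

/-- A measurable representative of `clip ∘ u`. -/
def cRep (u : EE) : ℝ → ℝ := fun x => clip ((Lp.aestronglyMeasurable u).mk _ x)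

lemma cRep_measurable (u : EE) : Measurable (cRep u) :=
  lipschitz_clip.continuous.measurable.comp
    (Lp.aestronglyMeasurable u).stronglyMeasurable_mk.measurable

lemma cRep_nonneg (u : EE) (x : ℝ) : 0 ≤ cRep u x := clip_nonneg _
lemma cRep_le_one (u : EE) (x : ℝ) : cRep u x ≤ 1 := clip_le_one _

lemma cRep_ae (u : EE) : cRep u =ᵐ[volume] fun x => clip ((u : ℝ → ℝ) x) := by
  filter_upwards [(Lp.aestronglyMeasurable u).ae_eq_mk] with x hx
  simp [cRep, ← hx]

lemma integrable_cRep_shift [IsFiniteMeasure μ] (u : EE) (x : ℝ) :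
    Integrable (fun y => cRep u (x - y)) μ := by
  refine Integrable.mono' (integrable_const 1) ?_ ?_
  · exact (((cRep_measurable u).comp (measurable_const.sub measurable_id)).aestronglyMeasurable)
  · refine Eventually.of_forall fun y => ?_
    rw [Real.norm_eq_abs, abs_of_nonneg (cRep_nonneg u _)]
    exact cRep_le_one u _

lemma mconv_cRep_nonneg (u : EE) (x : ℝ) : 0 ≤ mconv μ (cRep u) x :=
  integral_nonneg fun y => cRep_nonneg u _

lemma mconv_cRep_le_one [IsProbabilityMeasure μ] (u : EE) (x : ℝ) :
    mconv μ (cRep u) x ≤ 1 := by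
  have := integral_mono (integrable_cRep_shift μ u x) (integrable_const (1:ℝ))
    (fun y => cRep_le_one u (x - y))
  simpa [mconv] using this

lemma mconv_cRep_measurable [SFinite μ] (u : EE) :
    Measurable (mconv μ (cRep u)) := by
  have h : StronglyMeasurable fun p : ℝ × ℝ => cRep u (p.1 - p.2) :=
    ((cRep_measurable u).comp (measurable_fst.sub measurable_snd)).stronglyMeasurable
  exact (MeasureTheory.StronglyMeasurable.integral_prod_right' (ν := μ) h).measurable

/-- The core function of the clipped right-hand side (without the `-λu` part). -/
def phiCore (u : EE) : ℝ → ℝ :=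
  fun x => mconv μ (cRep u) x + (f (cRep u x) + K * cRep u x)

variable {f K}

lemma scalar_nonneg (hK : LipschitzWith K f) (hf0 : f 0 = 0) {s : ℝ}
    (h0 : 0 ≤ s) : 0 ≤ f s + K * s := by
  have := hK.dist_le_mul s 0
  rw [Real.dist_eq, Real.dist_eq, hf0, sub_zero, sub_zero, abs_of_nonneg h0] at this
  have := neg_abs_le (f s)
  nlinarith [abs_nonneg (f s), le_abs_self (f s), neg_abs_le (f s),
    (hK.dist_le_mul s 0)]

lemma scalar_le (hK : LipschitzWith K f) (hf1 : f 1 = 0) {s : ℝ}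
    (h1 : s ≤ 1) : f s + K * s ≤ K := by
  have h := hK.dist_le_mul s 1
  rw [Real.dist_eq, Real.dist_eq, hf1, sub_zero] at h
  have h2 := le_abs_self (f s)
  have h3 : |s - 1| = 1 - s := by rw [abs_of_nonpos (by linarith)]; ring
  rw [h3] at h
  nlinarith

lemma phiCore_nonneg [IsProbabilityMeasure μ] (hK : LipschitzWith K f) (hf0 : f 0 = 0)
    (u : EE) (x : ℝ) : 0 ≤ phiCore μ f K u x :=
  add_nonneg (mconv_cRep_nonneg μ u x)
    (scalar_nonneg hK hf0 (cRep_nonneg u x))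

lemma phiCore_le [IsProbabilityMeasure μ] (hK : LipschitzWith K f) (hf1 : f 1 = 0)
    (u : EE) (x : ℝ) : phiCore μ f K u x ≤ 1 + K :=
  add_le_add (mconv_cRep_le_one μ u x) (scalar_le hK hf1 (cRep_le_one u x))

lemma phiCore_memℒp [IsProbabilityMeasure μ] (hK : LipschitzWith K f)
    (hf0 : f 0 = 0) (hf1 : f 1 = 0) (u : EE) :
    MemLp (phiCore μ f K u) ⊤ (volume : Measure ℝ) := by
  refine memLp_top_of_bound ?_ (1 + K) (Eventually.of_forall fun x => ?_)
  · have hm : Measurable (phiCore μ f K u) := by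
      have h1 := mconv_cRep_measurable μ (u := u)
      have h2 : Measurable fun x => f (cRep u x) + K * cRep u x :=
        ((hK.continuous.measurable.comp (cRep_measurable u)).add
          ((cRep_measurable u).const_mul K))
      exact h1.add h2
    exact hm.aestronglyMeasurable
  · rw [Real.norm_eq_abs, abs_of_nonneg (phiCore_nonneg μ hK hf0 u x)]
    exact phiCore_le μ hK hf1 u x

variable (f K)

/-- The clipped nonlinear operator `Φ : L^∞ → L^∞`. -/
def Phi [IsProbabilityMeasure μ] (hK : LipschitzWith K f)
    (hf0 : f 0 = 0) (hf1 : f 1 = 0) (u : EE) : EE :=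
  (phiCore_memℒp μ hK hf0 hf1 u).toLp _

variable {μ}
variable [IsProbabilityMeasure μ] (hK : LipschitzWith K f) (hf0 : f 0 = 0) (hf1 : f 1 = 0)

lemma coeFn_Phi (u : EE) :
    (Phi μ f K hK hf0 hf1 u : ℝ → ℝ) =ᵐ[volume] phiCore μ f K u :=
  MemLp.coeFn_toLp _

lemma Phi_norm_le (u : EE) : ‖Phi μ f K hK hf0 hf1 u‖ ≤ 1 + K := by
  refine Linfty_norm_le (by positivity) ?_
  filter_upwards [coeFn_Phi (μ := μ) f K hK hf0 hf1 u] with x hx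
  rw [hx, abs_of_nonneg (phiCore_nonneg μ hK hf0 u x)]
  exact phiCore_le μ hK hf1 u x

lemma Phi_ae_nonneg (u : EE) :
    ∀ᵐ x : ℝ ∂volume, 0 ≤ (Phi μ f K hK hf0 hf1 u : ℝ → ℝ) x := by
  filter_upwards [coeFn_Phi (μ := μ) f K hK hf0 hf1 u] with x hx
  rw [hx]; exact phiCore_nonneg μ hK hf0 u x

lemma Phi_ae_le (u : EE) :
    ∀ᵐ x : ℝ ∂volume, (Phi μ f K hK hf0 hf1 u : ℝ → ℝ) x ≤ 1 + K := by
  filter_upwards [coeFn_Phi (μ := μ) f K hK hf0 hf1 u] with x hx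
  rw [hx]; exact phiCore_le μ hK hf1 u x

/-- `cRep` is `L∞`-a.e.-close for close arguments. -/
lemma cRep_ae_close (u v : EE) :
    ∀ᵐ x : ℝ ∂volume, |cRep u x - cRep v x| ≤ ‖u - v‖ := by
  filter_upwards [cRep_ae u, cRep_ae v, ae_bound_of_Linfty (u - v),
    Lp.coeFn_sub u v] with x h1 h2 h3 h4
  rw [h1, h2]
  refine (abs_clip_sub_clip _ _).trans ?_
  have : (u : ℝ → ℝ) x - (v : ℝ → ℝ) x = ((u - v : EE) : ℝ → ℝ) x := by
    rw [h4]; simp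
  rw [this]; exact h3

/-- The key Lipschitz estimate for `Φ`. -/
lemma Phi_lipschitz (u v : EE) :
    ‖Phi μ f K hK hf0 hf1 u - Phi μ f K hK hf0 hf1 v‖ ≤ (1 + 2 * K) * ‖u - v‖ := by
  set ε := ‖u - v‖ with hε
  have hε0 : 0 ≤ ε := norm_nonneg _
  -- bad set
  set N := {x : ℝ | ¬ |cRep u x - cRep v x| ≤ ε} with hN
  have hN0 : volume N = 0 := by
    have := cRep_ae_close u v
    rwa [MeasureTheory.ae_iff] at this
  have hmain : ∀ᵐ x : ℝ ∂volume,
      |phiCore μ f K u x - phiCore μ f K v x| ≤ (1 + 2 * K) * ε := by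
    filter_upwards [ae_ae_sub_not_mem μ hN0,
      (MeasureTheory.measure_eq_zero_iff_ae_notMem).mp hN0] with x hx hxN
    have hxc : |cRep u x - cRep v x| ≤ ε := not_not.mp hxN
    have hconv : |mconv μ (cRep u) x - mconv μ (cRep v) x| ≤ ε := by
      rw [mconv, mconv, ← integral_sub (integrable_cRep_shift μ u x)
        (integrable_cRep_shift μ v x)]
      have hb : ‖∫ y, (cRep u (x - y) - cRep v (x - y)) ∂μ‖ ≤ ∫ _y, ε ∂μ := by
        refine norm_integral_le_of_norm_le (integrable_const ε) ?_
        filter_upwards [hx] with y hy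
        rw [Real.norm_eq_abs]
        exact not_not.mp hy
      rw [integral_const, probReal_univ] at hb
      rw [← Real.norm_eq_abs]
      simpa using hb
    have hpt : |(f (cRep u x) + K * cRep u x) - (f (cRep v x) + K * cRep v x)| ≤
        2 * K * ε := by
      have h1 : |f (cRep u x) - f (cRep v x)| ≤ K * |cRep u x - cRep v x| := by
        have := hK.dist_le_mul (cRep u x) (cRep v x)
        rwa [Real.dist_eq, Real.dist_eq] at this
      have h2 : |K * cRep u x - K * cRep v x| = K * |cRep u x - cRep v x| := by
        rw [← mul_sub, abs_mul, abs_of_nonneg (K.coe_nonneg)]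
      calc |(f (cRep u x) + K * cRep u x) - (f (cRep v x) + K * cRep v x)|
          ≤ |f (cRep u x) - f (cRep v x)| + |K * cRep u x - K * cRep v x| := by
            have := abs_add_le (f (cRep u x) - f (cRep v x))
              (K * cRep u x - K * cRep v x)
            refine le_trans (le_of_eq ?_) this
            ring_nf
        _ ≤ K * |cRep u x - cRep v x| + K * |cRep u x - cRep v x| := by
            rw [h2]; exact add_le_add_left h1 _
        _ ≤ 2 * K * ε := by nlinarith [K.coe_nonneg]
    calc |phiCore μ f K u x - phiCore μ f K v x|
        ≤ |mconv μ (cRep u) x - mconv μ (cRep v) x| +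
          |(f (cRep u x) + K * cRep u x) - (f (cRep v x) + K * cRep v x)| := by
          rw [phiCore, phiCore]
          have := abs_add_le (mconv μ (cRep u) x - mconv μ (cRep v) x)
            ((f (cRep u x) + K * cRep u x) - (f (cRep v x) + K * cRep v x))
          refine le_trans (le_of_eq ?_) this
          ring_nf
      _ ≤ ε + 2 * K * ε := add_le_add hconv hpt
      _ = (1 + 2 * K) * ε := by ring
  refine Linfty_norm_le (by positivity) ?_
  filter_upwards [hmain, Lp.coeFn_sub (Phi μ f K hK hf0 hf1 u) (Phi μ f K hK hf0 hf1 v),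
    coeFn_Phi (μ := μ) f K hK hf0 hf1 u, coeFn_Phi (μ := μ) f K hK hf0 hf1 v] with x h1 h2 h3 h4
  rw [h2]
  simpa [h3, h4] using h1

lemma Phi_continuous : Continuous (Phi μ f K hK hf0 hf1) := by
  refine (LipschitzWith.of_dist_le_mul (K := 1 + 2 * K) fun u v => ?_).continuous
  rw [dist_eq_norm, dist_eq_norm]
  have := Phi_lipschitz (μ := μ) f K hK hf0 hf1 u v
  refine this.trans (le_of_eq ?_)
  push_cast
  ring

end Phi

lemma integral_L_exp (L T : ℝ) :
    ∫ s in (0:ℝ)..T, L * Real.exp (L * s) = Real.exp (L * T) - 1 := by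
  have hd : ∀ s ∈ Set.uIcc (0:ℝ) T,
      HasDerivAt (fun s => Real.exp (L * s)) (L * Real.exp (L * s)) s := by
    intro s _
    have h1 : HasDerivAt (fun s : ℝ => L * s) L s := by
      simpa using (hasDerivAt_id s).const_mul L
    simpa [mul_comm] using h1.exp
  have hi : IntervalIntegrable (fun s => L * Real.exp (L * s)) volume 0 T :=
    (continuous_const.mul (Real.continuous_exp.comp (continuous_const.mul continuous_id))).intervalIntegrable _ _
  have := intervalIntegral.integral_eq_sub_of_hasDerivAt hd hi
  simpa using this

section FixedPoint

variable (μ : Measure ℝ) {f : ℝ → ℝ} {K : ℝ≥0}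
variable [IsProbabilityMeasure μ] (hK : LipschitzWith K f) (hf0 : f 0 = 0) (hf1 : f 1 = 0)
variable (u₀ : EE)

/-- Curve space. -/
abbrev WW : Type := BoundedContinuousFunction ℝ EE

/-- time-rescaled integrand. -/
def gmap (w : WW) : ℝ → EE := fun s =>
  Real.exp (((K:ℝ) + 1) * s) • Phi μ f K hK hf0 hf1 (Real.exp (((K:ℝ) + 1) * max s 0) • w s)

lemma gmap_continuous (w : WW) : Continuous (gmap μ hK hf0 hf1 w) := by
  have h1 : Continuous fun s : ℝ => Real.exp (((K:ℝ) + 1) * s) :=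
    Real.continuous_exp.comp (continuous_const.mul continuous_id)
  have h2 : Continuous fun s : ℝ => Real.exp (((K:ℝ) + 1) * max s 0) :=
    Real.continuous_exp.comp (continuous_const.mul (continuous_id.max continuous_const))
  exact h1.smul ((Phi_continuous f K hK hf0 hf1).comp (h2.smul w.continuous))

lemma gmap_norm_le (w : WW) (s : ℝ) :
    ‖gmap μ hK hf0 hf1 w s‖ ≤ ((K:ℝ) + 1) * Real.exp (((K:ℝ) + 1) * s) := by
  rw [gmap, norm_smul, Real.norm_eq_abs, abs_of_pos (Real.exp_pos _)]
  have hp := Phi_norm_le (μ := μ) f K hK hf0 hf1 (Real.exp (((K:ℝ) + 1) * max s 0) • w s)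
  calc Real.exp (((K:ℝ) + 1) * s) * ‖Phi μ f K hK hf0 hf1 (Real.exp (((K:ℝ) + 1) * max s 0) • w s)‖
      ≤ Real.exp (((K:ℝ) + 1) * s) * (1 + (K:ℝ)) :=
        mul_le_mul_of_nonneg_left hp (Real.exp_pos _).le
    _ = ((K:ℝ) + 1) * Real.exp (((K:ℝ) + 1) * s) := by ring

lemma gmap_intervalIntegrable (w : WW) (a b : ℝ) :
    IntervalIntegrable (gmap μ hK hf0 hf1 w) volume a b :=
  (gmap_continuous μ hK hf0 hf1 w).intervalIntegrable a b

lemma norm_intV_le (w : WW) {T : ℝ} (hT : 0 ≤ T) :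
    ‖∫ s in (0:ℝ)..T, gmap μ hK hf0 hf1 w s‖ ≤ Real.exp (((K:ℝ) + 1) * T) - 1 := by
  have hb := intervalIntegral.norm_integral_le_abs_of_norm_le
    (g := fun s => ((K:ℝ) + 1) * Real.exp (((K:ℝ) + 1) * s))
    (Eventually.of_forall fun s => gmap_norm_le μ hK hf0 hf1 w s)
    ((continuous_const.mul (Real.continuous_exp.comp
      (continuous_const.mul continuous_id))).intervalIntegrable (μ := volume) 0 T)
  rw [integral_L_exp] at hb
  calc ‖∫ s in (0:ℝ)..T, gmap μ hK hf0 hf1 w s‖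
      ≤ |Real.exp (((K:ℝ) + 1) * T) - 1| := hb
    _ = Real.exp (((K:ℝ) + 1) * T) - 1 := by
        rw [abs_of_nonneg]
        have : (1:ℝ) ≤ Real.exp (((K:ℝ) + 1) * T) := Real.one_le_exp (by positivity)
        linarith

/-- The Picard-type fixed point map. -/
def QQ (w : WW) : WW := by
  refine BoundedContinuousFunction.ofNormedAddCommGroup
    (fun t => Real.exp (-(2 * ((K:ℝ) + 1) * max t 0)) •
      (u₀ + ∫ s in (0:ℝ)..(max t 0), gmap μ hK hf0 hf1 w s)) ?_ (‖u₀‖ + 1) ?_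
  · have hmax : Continuous fun t : ℝ => max t 0 := continuous_id.max continuous_const
    have h1 : Continuous fun t : ℝ => Real.exp (-(2 * ((K:ℝ) + 1) * max t 0)) :=
      Real.continuous_exp.comp ((continuous_const.mul hmax).neg)
    have h2 : Continuous fun t : ℝ => u₀ + ∫ s in (0:ℝ)..(max t 0), gmap μ hK hf0 hf1 w s :=
      continuous_const.add ((intervalIntegral.continuous_primitive (μ := volume)
        (gmap_intervalIntegrable μ hK hf0 hf1 w) 0).comp hmax)
    exact h1.smul h2
  · intro t
    set T := max t 0 with hT
    have hT0 : 0 ≤ T := le_max_right _ _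
    rw [norm_smul, Real.norm_eq_abs, abs_of_pos (Real.exp_pos _)]
    have h1 : ‖u₀ + ∫ s in (0:ℝ)..T, gmap μ hK hf0 hf1 w s‖ ≤
        ‖u₀‖ + (Real.exp (((K:ℝ) + 1) * T) - 1) :=
      (norm_add_le _ _).trans (add_le_add_right (norm_intV_le μ hK hf0 hf1 w hT0) _)
    have hexp1 : Real.exp (-(2 * ((K:ℝ) + 1) * T)) ≤ 1 := by
      refine Real.exp_le_one_iff.mpr ?_
      nlinarith [K.coe_nonneg]
    have hexp2 : Real.exp (-(2 * ((K:ℝ) + 1) * T)) * Real.exp (((K:ℝ) + 1) * T) ≤ 1 := by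
      rw [← Real.exp_add]
      refine Real.exp_le_one_iff.mpr ?_
      nlinarith [K.coe_nonneg]
    calc Real.exp (-(2 * ((K:ℝ) + 1) * T)) * ‖u₀ + ∫ s in (0:ℝ)..T, gmap μ hK hf0 hf1 w s‖
        ≤ Real.exp (-(2 * ((K:ℝ) + 1) * T)) * (‖u₀‖ + (Real.exp (((K:ℝ) + 1) * T) - 1)) :=
          mul_le_mul_of_nonneg_left h1 (Real.exp_pos _).le
      _ ≤ ‖u₀‖ + 1 := by
          have h3 : Real.exp (-(2 * ((K:ℝ) + 1) * T)) * ‖u₀‖ ≤ ‖u₀‖ :=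
            mul_le_of_le_one_left (norm_nonneg _) hexp1
          have h4 : Real.exp (-(2 * ((K:ℝ) + 1) * T)) * (Real.exp (((K:ℝ) + 1) * T) - 1) ≤ 1 := by
            have h5 : (0:ℝ) < Real.exp (-(2 * ((K:ℝ) + 1) * T)) := Real.exp_pos _
            nlinarith
          nlinarith [norm_nonneg u₀]

lemma QQ_apply (w : WW) (t : ℝ) :
    QQ μ hK hf0 hf1 u₀ w t = Real.exp (-(2 * ((K:ℝ) + 1) * max t 0)) •
      (u₀ + ∫ s in (0:ℝ)..(max t 0), gmap μ hK hf0 hf1 w s) := rfl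

lemma QQ_contract (w₁ w₂ : WW) :
    dist (QQ μ hK hf0 hf1 u₀ w₁) (QQ μ hK hf0 hf1 u₀ w₂) ≤
      ((1 + 2 * (K:ℝ)) / (2 * ((K:ℝ) + 1))) * dist w₁ w₂ := by
  set L : ℝ := (K:ℝ) + 1 with hL
  have hL0 : (0:ℝ) < L := by positivity
  set d := dist w₁ w₂ with hd
  have hd0 : 0 ≤ d := dist_nonneg
  refine BoundedContinuousFunction.dist_le (by positivity) |>.mpr fun t => ?_
  set T := max t 0 with hT
  have hT0 : 0 ≤ T := le_max_right _ _
  rw [QQ_apply, QQ_apply, dist_eq_norm, ← smul_sub, add_sub_add_left_eq_sub,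
    ← intervalIntegral.integral_sub (gmap_intervalIntegrable μ hK hf0 hf1 w₁ 0 T)
      (gmap_intervalIntegrable μ hK hf0 hf1 w₂ 0 T)]
  have hptwise : ∀ s ∈ Set.uIoc (0:ℝ) T,
      ‖gmap μ hK hf0 hf1 w₁ s - gmap μ hK hf0 hf1 w₂ s‖ ≤
        ((1 + 2 * (K:ℝ)) * d / (2 * L)) * (2 * L * Real.exp (2 * L * s)) := by
    intro s hs
    have hs0 : 0 < s := by
      rcases Set.uIoc_subset_uIcc hs with h
      have := hs.1
      rw [min_eq_left hT0] at this
      exact this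
    have hmax : max s 0 = s := max_eq_left hs0.le
    rw [gmap, gmap, ← smul_sub, norm_smul, Real.norm_eq_abs, abs_of_pos (Real.exp_pos _)]
    have hphi := Phi_lipschitz (μ := μ) f K hK hf0 hf1
      (Real.exp (L * max s 0) • w₁ s) (Real.exp (L * max s 0) • w₂ s)
    rw [← smul_sub, norm_smul, Real.norm_eq_abs, abs_of_pos (Real.exp_pos _)] at hphi
    have hws : ‖w₁ s - w₂ s‖ ≤ d := by
      rw [← dist_eq_norm]
      exact BoundedContinuousFunction.dist_coe_le_dist s
    have hKd : (0:ℝ) ≤ 1 + 2 * (K:ℝ) := by positivity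
    calc Real.exp (L * s) * ‖Phi μ f K hK hf0 hf1 (Real.exp (L * max s 0) • w₁ s) -
          Phi μ f K hK hf0 hf1 (Real.exp (L * max s 0) • w₂ s)‖
        ≤ Real.exp (L * s) * ((1 + 2 * (K:ℝ)) * (Real.exp (L * max s 0) * ‖w₁ s - w₂ s‖)) :=
          mul_le_mul_of_nonneg_left hphi (Real.exp_pos _).le
      _ ≤ Real.exp (L * s) * ((1 + 2 * (K:ℝ)) * (Real.exp (L * s) * d)) := by
          rw [hmax]
          refine mul_le_mul_of_nonneg_left ?_ (Real.exp_pos _).le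
          refine mul_le_mul_of_nonneg_left ?_ hKd
          exact mul_le_mul_of_nonneg_left hws (Real.exp_pos _).le
      _ = ((1 + 2 * (K:ℝ)) * d / (2 * L)) * (2 * L * Real.exp (2 * L * s)) := by
          rw [show (2:ℝ) * L * s = L * s + (L * s) by ring, Real.exp_add]
          field_simp
  have haem : ∀ᵐ s ∂(volume.restrict (Set.uIoc (0:ℝ) T)),
      ‖gmap μ hK hf0 hf1 w₁ s - gmap μ hK hf0 hf1 w₂ s‖ ≤
        ((1 + 2 * (K:ℝ)) * d / (2 * L)) * (2 * L * Real.exp (2 * L * s)) := by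
    filter_upwards [ae_restrict_mem measurableSet_uIoc] with s hs
    exact hptwise s hs
  have hb := intervalIntegral.norm_integral_le_abs_of_norm_le haem
    ((continuous_const.mul (continuous_const.mul (Real.continuous_exp.comp
      (continuous_const.mul continuous_id)))).intervalIntegrable (μ := volume) 0 T)
  have hgint : (∫ s in (0:ℝ)..T, ((1 + 2 * (K:ℝ)) * d / (2 * L)) * (2 * L * Real.exp (2 * L * s)))
      = ((1 + 2 * (K:ℝ)) * d / (2 * L)) * (Real.exp (2 * L * T) - 1) := by
    rw [intervalIntegral.integral_const_mul]
    congr 1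
    have := integral_L_exp (2 * L) T
    simpa [mul_assoc] using this
  rw [hgint] at hb
  have hexpT1 : (1:ℝ) ≤ Real.exp (2 * L * T) := Real.one_le_exp (by positivity)
  have hC0 : (0:ℝ) ≤ (1 + 2 * (K:ℝ)) * d / (2 * L) := by positivity
  have habs : |((1 + 2 * (K:ℝ)) * d / (2 * L)) * (Real.exp (2 * L * T) - 1)| =
      ((1 + 2 * (K:ℝ)) * d / (2 * L)) * (Real.exp (2 * L * T) - 1) := by
    rw [abs_of_nonneg (by nlinarith)]
  rw [habs] at hb
  rw [norm_smul, Real.norm_eq_abs, abs_of_pos (Real.exp_pos _)]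
  have hmul : Real.exp (-(2 * L * T)) * Real.exp (2 * L * T) = 1 := by
    rw [← Real.exp_add]; simp
  calc Real.exp (-(2 * L * T)) * ‖∫ s in (0:ℝ)..T,
        (gmap μ hK hf0 hf1 w₁ s - gmap μ hK hf0 hf1 w₂ s)‖
      ≤ Real.exp (-(2 * L * T)) *
        (((1 + 2 * (K:ℝ)) * d / (2 * L)) * (Real.exp (2 * L * T) - 1)) :=
        mul_le_mul_of_nonneg_left hb (Real.exp_pos _).le
    _ ≤ (1 + 2 * (K:ℝ)) * d / (2 * L) := by nlinarith [Real.exp_pos (-(2 * L * T))]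
    _ = ((1 + 2 * (K:ℝ)) / (2 * ((K:ℝ) + 1))) * d := by rw [hL]; ring

end FixedPoint

section Cone

/-- The a.e.-nonnegativity cone in `L^∞`. -/
def coneNN : Set EE := {v | ∀ᵐ x : ℝ ∂volume, 0 ≤ (v : ℝ → ℝ) x}

lemma coneNN_convex : Convex ℝ coneNN := by
  intro u hu v hv a b ha hb _
  show ∀ᵐ x : ℝ ∂volume, 0 ≤ ((a • u + b • v : EE) : ℝ → ℝ) x
  filter_upwards [hu, hv, Lp.coeFn_add (a • u) (b • v), Lp.coeFn_smul a u,
    Lp.coeFn_smul b v] with x h1 h2 h3 h4 h5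
  rw [h3, Pi.add_apply, h4, h5, Pi.smul_apply, Pi.smul_apply, smul_eq_mul, smul_eq_mul]
  positivity

set_option synthInstance.maxHeartbeats 1000000 in
set_option maxHeartbeats 1000000 in
lemma coneNN_closed : IsClosed coneNN := by
  refine IsSeqClosed.isClosed ?_
  intro x p hx hlim
  show ∀ᵐ y : ℝ ∂volume, 0 ≤ (p : ℝ → ℝ) y
  have hcount : ∀ᵐ y : ℝ ∂volume, ∀ n : ℕ,
      0 ≤ (x n : ℝ → ℝ) y ∧ |(p : ℝ → ℝ) y - (x n : ℝ → ℝ) y| ≤ ‖p - x n‖ := by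
    rw [MeasureTheory.ae_all_iff]
    intro n
    filter_upwards [hx n, ae_bound_of_Linfty (p - x n), Lp.coeFn_sub p (x n)] with y h1 h2 h3
    refine ⟨h1, ?_⟩
    have : (p : ℝ → ℝ) y - (x n : ℝ → ℝ) y = ((p - x n : EE) : ℝ → ℝ) y := by
      rw [h3]; simp
    rw [this]; exact h2
  filter_upwards [hcount] with y hy
  have htend : Tendsto (fun n => ‖p - x n‖) atTop (𝓝 0) := by
    have := hlim
    rw [tendsto_iff_norm_sub_tendsto_zero] at this
    simpa [norm_sub_rev] using this
  have hlb : ∀ n, -‖p - x n‖ ≤ (p : ℝ → ℝ) y := by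
    intro n
    have h1 := (hy n).1
    have h2 := (hy n).2
    have := abs_le.mp h2
    linarith [this.1]
  have : Tendsto (fun n => -‖p - x n‖) atTop (𝓝 (-0)) := htend.neg
  rw [neg_zero] at this
  exact le_of_tendsto this (Eventually.of_forall hlb)

lemma coneNN_smul {c : ℝ} (hc : 0 ≤ c) {v : EE} (hv : v ∈ coneNN) : c • v ∈ coneNN := by
  show ∀ᵐ x : ℝ ∂volume, 0 ≤ ((c • v : EE) : ℝ → ℝ) x
  filter_upwards [hv, Lp.coeFn_smul c v] with x h1 h2
  rw [h2, Pi.smul_apply, smul_eq_mul]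
  positivity

lemma cone_integral_mem {F : ℝ → EE} (hc : Continuous F) {T : ℝ} (hT : 0 ≤ T)
    (hF : ∀ s, F s ∈ coneNN) : (∫ s in (0:ℝ)..T, F s) ∈ coneNN := by
  rcases eq_or_lt_of_le hT with h | h
  · rw [← h, intervalIntegral.integral_same]
    show ∀ᵐ x : ℝ ∂volume, 0 ≤ ((0 : EE) : ℝ → ℝ) x
    filter_upwards [Lp.coeFn_zero (E := ℝ) (p := ⊤) (μ := (volume : Measure ℝ))] with x hx
    rw [hx]; rfl
  · rw [intervalIntegral.integral_of_le hT]
    have h0 : volume (Set.Ioc (0:ℝ) T) ≠ 0 := by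
      rw [Real.volume_Ioc]
      simp [h]
    have hfin : volume (Set.Ioc (0:ℝ) T) ≠ ⊤ := by
      rw [Real.volume_Ioc]
      exact ENNReal.ofReal_ne_top
    have hint : IntegrableOn F (Set.Ioc (0:ℝ) T) volume :=
      (hc.integrableOn_Icc).mono_set Set.Ioc_subset_Icc_self
    have havg := coneNN_convex.set_average_mem coneNN_closed h0 hfin
      (Eventually.of_forall fun s => hF s) hint
    rw [MeasureTheory.setAverage_eq, measureReal_def] at havg
    have hc' : (volume (Set.Ioc (0:ℝ) T)).toReal ≠ 0 := by
      rw [Real.volume_Ioc, ENNReal.toReal_ofReal (by linarith)]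
      linarith
    have := coneNN_smul (c := (volume (Set.Ioc (0:ℝ) T)).toReal) ENNReal.toReal_nonneg havg
    rwa [smul_inv_smul₀ hc'] at this

/-- The constant function `1` in `L^∞`. -/
def oneEE : EE :=
  (memLp_top_of_bound (aestronglyMeasurable_const (b := (1:ℝ))) 1
    (Eventually.of_forall fun _ => by norm_num)).toLp _

lemma coeFn_oneEE : (oneEE : ℝ → ℝ) =ᵐ[volume] fun _ => (1:ℝ) :=
  MemLp.coeFn_toLp _

end Cone

set_option maxHeartbeats 2000000 in
/-- Proposition 13, first part. -/
theorem proposition13_first (μ : Measure ℝ) (hμ : μ Set.univ = 1)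
    (f : ℝ → ℝ) (hf : MonostableF f)
    (u₀ : Lp ℝ ⊤ (volume : Measure ℝ))
    (h₀ : ∀ᵐ x : ℝ ∂volume, 0 ≤ (u₀ : ℝ → ℝ) x ∧ (u₀ : ℝ → ℝ) x ≤ 1) :
    ∃ U : ℝ → Lp ℝ ⊤ (volume : Measure ℝ),
      IsSolutionOn μ f (Set.Ici 0) U ∧ U 0 = u₀ ∧
      ∀ t : ℝ, 0 ≤ t →
        ∀ᵐ x : ℝ ∂volume, 0 ≤ (U t : ℝ → ℝ) x ∧ (U t : ℝ → ℝ) x ≤ 1 := by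
  haveI hprob : IsProbabilityMeasure μ := ⟨hμ⟩
  obtain ⟨⟨K, hK⟩, hf0, hf1, -⟩ := hf
  -- the contraction
  set cK : ℝ≥0 := (1 + 2 * K) / (2 * (K + 1)) with hcK
  have hcoe : (cK : ℝ) = (1 + 2 * (K:ℝ)) / (2 * ((K:ℝ) + 1)) := by
    rw [hcK, NNReal.coe_div]
    push_cast
    ring_nf
  have hcKlt : cK < 1 := by
    rw [← NNReal.coe_lt_coe, hcoe, NNReal.coe_one, div_lt_one (by positivity)]
    nlinarith [K.coe_nonneg]
  have hlip : LipschitzWith cK (QQ μ hK hf0 hf1 u₀) := by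
    refine LipschitzWith.of_dist_le_mul fun w₁ w₂ => ?_
    have h := QQ_contract μ hK hf0 hf1 u₀ w₁ w₂
    rwa [← hcoe] at h
  have hcontr : ContractingWith cK (QQ μ hK hf0 hf1 u₀) := ⟨hcKlt, hlip⟩
  haveI : Nonempty WW := ⟨0⟩
  obtain ⟨w, hw⟩ : ∃ w : WW, QQ μ hK hf0 hf1 u₀ w = w :=
    ⟨_, hcontr.fixedPoint_isFixedPt⟩
  set L : ℝ := (K : ℝ) + 1 with hL
  have hL1 : (1:ℝ) ≤ L := by rw [hL]; nlinarith [K.coe_nonneg]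
  set U : ℝ → Lp ℝ ⊤ (volume : Measure ℝ) :=
    fun t => Real.exp (L * max t 0) • w t with hU
  set P : ℝ → Lp ℝ ⊤ (volume : Measure ℝ) :=
    fun τ => ∫ s in (0:ℝ)..τ, gmap μ hK hf0 hf1 w s with hP
  have hgU : ∀ s, gmap μ hK hf0 hf1 w s
      = Real.exp (L * s) • Phi μ f K hK hf0 hf1 (U s) := fun s => rfl
  have key : ∀ t : ℝ, U t = Real.exp (-(L * max t 0)) • (u₀ + P (max t 0)) := by
    intro t
    have h1 : U t = Real.exp (L * max t 0) • (QQ μ hK hf0 hf1 u₀ w t) := by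
      rw [hw]
    rw [QQ_apply] at h1
    rw [h1, smul_smul, ← Real.exp_add]
    have h2 : L * max t 0 + -(2 * ((K:ℝ) + 1) * max t 0) = -(L * max t 0) := by
      rw [hL]; ring
    rw [h2]
  have hgc : Continuous (gmap μ hK hf0 hf1 w) := gmap_continuous μ hK hf0 hf1 w
  have hPd : ∀ τ : ℝ, HasDerivAt P (gmap μ hK hf0 hf1 w τ) τ := fun τ =>
    (hgc.integral_hasStrictDerivAt 0 τ).hasDerivAt
  set D : ℝ → Lp ℝ ⊤ (volume : Measure ℝ) :=
    fun t => Phi μ f K hK hf0 hf1 (U t) - L • U t with hD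
  -- derivative
  have hUderiv : ∀ t ∈ Set.Ici (0:ℝ), HasDerivWithinAt U (D t) (Set.Ici 0) t := by
    intro t ht
    have hc : HasDerivAt (fun τ : ℝ => Real.exp (-(L * τ)))
        (-L * Real.exp (-(L * t))) t := by
      have h1 : HasDerivAt (fun τ : ℝ => -L * τ) (-L) t := by
        simpa using (hasDerivAt_id t).const_mul (-L)
      have h2 := h1.exp
      have h3 : (fun τ : ℝ => Real.exp (-L * τ)) = fun τ : ℝ => Real.exp (-(L * τ)) := by
        funext τ; ring_nf
      rw [h3] at h2
      convert h2 using 1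
      ring_nf
    have hF : HasDerivAt (fun τ => u₀ + P τ) (gmap μ hK hf0 hf1 w t) t :=
      (hPd t).const_add u₀
    have hsm := hc.smul hF
    have hTt : max t 0 = t := max_eq_left ht
    have hval : Real.exp (-(L * t)) • gmap μ hK hf0 hf1 w t
        + (-L * Real.exp (-(L * t))) • (u₀ + P t) = D t := by
      have e1 : (-L * Real.exp (-(L * t))) • (u₀ + P t) = (-L) • U t := by
        rw [key t, hTt, mul_smul]
      have e2 : Real.exp (-(L * t)) • gmap μ hK hf0 hf1 w t
          = Phi μ f K hK hf0 hf1 (U t) := by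
        rw [hgU t, smul_smul, ← Real.exp_add]
        have h4 : -(L * t) + L * t = 0 := by ring
        rw [h4, Real.exp_zero, one_smul]
      rw [e1, e2, hD, neg_smul]
      abel_nf
    rw [hval] at hsm
    refine hsm.hasDerivWithinAt.congr ?_ ?_
    · intro τ hτ
      rw [key τ, max_eq_left hτ]; rfl
    · rw [key t, hTt]; rfl
  -- invariance
  have hconeP : ∀ T : ℝ, 0 ≤ T → P T ∈ coneNN := by
    intro T hT
    refine cone_integral_mem hgc hT fun s => ?_
    rw [hgU s]
    exact coneNN_smul (Real.exp_pos _).le (Phi_ae_nonneg (μ := μ) f K hK hf0 hf1 (U s))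
  have hconeQ : ∀ T : ℝ, 0 ≤ T →
      ((Real.exp (L * T) - 1) • oneEE - P T) ∈ coneNN := by
    intro T hT
    have hHc : Continuous fun s : ℝ =>
        (L * Real.exp (L * s)) • oneEE - gmap μ hK hf0 hf1 w s :=
      ((continuous_const.mul (Real.continuous_exp.comp
        (continuous_const.mul continuous_id))).smul continuous_const).sub hgc
    have hHmem : ∀ s : ℝ,
        ((L * Real.exp (L * s)) • oneEE - gmap μ hK hf0 hf1 w s) ∈ coneNN := by
      intro s
      rw [hgU s]
      have hmain : ∀ᵐ x : ℝ ∂volume, 0 ≤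
          ((((L * Real.exp (L * s)) • oneEE -
            Real.exp (L * s) • Phi μ f K hK hf0 hf1 (U s) :
            Lp ℝ ⊤ (volume : Measure ℝ))) : ℝ → ℝ) x := by
        filter_upwards [Lp.coeFn_sub ((L * Real.exp (L * s)) • oneEE)
            (Real.exp (L * s) • Phi μ f K hK hf0 hf1 (U s)),
          Lp.coeFn_smul (L * Real.exp (L * s)) oneEE, coeFn_oneEE,
          Lp.coeFn_smul (Real.exp (L * s)) (Phi μ f K hK hf0 hf1 (U s)),
          Phi_ae_le (μ := μ) f K hK hf0 hf1 (U s)] with x h1 h2 h3 h4 h5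
        rw [h1, Pi.sub_apply, h2, h4, Pi.smul_apply, Pi.smul_apply, h3,
          smul_eq_mul, smul_eq_mul, mul_one]
        have h6 : ((Phi μ f K hK hf0 hf1 (U s) : ℝ → ℝ)) x ≤ L := by rw [hL]; linarith
        nlinarith [Real.exp_pos (L * s), h6]
      exact hmain
    have hmem := cone_integral_mem hHc hT hHmem
    have hint1 : IntervalIntegrable
        (fun s : ℝ => (L * Real.exp (L * s)) • oneEE) volume 0 T :=
      ((continuous_const.mul (Real.continuous_exp.comp
        (continuous_const.mul continuous_id))).smul continuous_const).intervalIntegrable _ _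
    have heqI : (∫ s in (0:ℝ)..T,
        ((L * Real.exp (L * s)) • oneEE - gmap μ hK hf0 hf1 w s))
        = (Real.exp (L * T) - 1) • oneEE - P T := by
      rw [intervalIntegral.integral_sub hint1 (gmap_intervalIntegrable μ hK hf0 hf1 w 0 T),
        intervalIntegral.integral_smul_const, integral_L_exp]
    rwa [heqI] at hmem
  have hinv : ∀ t : ℝ, 0 ≤ t →
      ∀ᵐ x : ℝ ∂volume, 0 ≤ (U t : ℝ → ℝ) x ∧ (U t : ℝ → ℝ) x ≤ 1 := by
    intro t ht
    have hTt : max t 0 = t := max_eq_left ht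
    have hkey := key t
    rw [hTt] at hkey
    have hpn : ∀ᵐ x : ℝ ∂volume, 0 ≤ (P t : ℝ → ℝ) x := hconeP t ht
    have hpu : ∀ᵐ x : ℝ ∂volume,
        0 ≤ (((Real.exp (L * t) - 1) • oneEE - P t : Lp ℝ ⊤ (volume : Measure ℝ)) : ℝ → ℝ) x :=
      hconeQ t ht
    filter_upwards [h₀, hpn, hpu,
      Lp.coeFn_smul (Real.exp (-(L * t))) (u₀ + P t),
      Lp.coeFn_add u₀ (P t),
      Lp.coeFn_sub ((Real.exp (L * t) - 1) • oneEE) (P t),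
      Lp.coeFn_smul (Real.exp (L * t) - 1) oneEE,
      coeFn_oneEE] with x h0 h1 h2 h3 h4 h5 h6 h7
    have hub : (P t : ℝ → ℝ) x ≤ Real.exp (L * t) - 1 := by
      rw [h5, Pi.sub_apply, h6, Pi.smul_apply, h7, smul_eq_mul, mul_one] at h2
      linarith
    have hUx : (U t : ℝ → ℝ) x = Real.exp (-(L * t)) * ((u₀ : ℝ → ℝ) x + (P t : ℝ → ℝ) x) := by
      rw [hkey, h3, Pi.smul_apply, h4, Pi.add_apply, smul_eq_mul]
    have hprod : Real.exp (-(L * t)) * Real.exp (L * t) = 1 := by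
      rw [← Real.exp_add]; simp
    rw [hUx]
    constructor
    · exact mul_nonneg (Real.exp_pos _).le (add_nonneg h0.1 h1)
    · nlinarith [Real.exp_pos (-(L * t)), h0.1, h0.2]
  -- the equation
  have heqn : ∀ t ∈ Set.Ici (0:ℝ), (D t : ℝ → ℝ) =ᵐ[volume]
      fun x => mconv μ (U t) x - (U t : ℝ → ℝ) x + f ((U t : ℝ → ℝ) x) := by
    intro t ht
    have hinvt := hinv t ht
    have h1 : cRep (U t) =ᵐ[volume] (U t : ℝ → ℝ) := by
      filter_upwards [cRep_ae (U t), hinvt] with x hx h2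
      rw [hx, clip_eq_self h2.1 h2.2]
    have hN0 : volume {x : ℝ | ¬ cRep (U t) x = (U t : ℝ → ℝ) x} = 0 :=
      MeasureTheory.ae_iff.mp h1
    have hm : ∀ᵐ x : ℝ ∂volume, mconv μ (cRep (U t)) x = mconv μ ((U t : ℝ → ℝ)) x := by
      filter_upwards [ae_ae_sub_not_mem μ hN0] with x hx
      rw [mconv, mconv]
      refine integral_congr_ae ?_
      filter_upwards [hx] with y hy
      exact not_not.mp hy
    filter_upwards [Lp.coeFn_sub (Phi μ f K hK hf0 hf1 (U t)) (L • U t),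
      coeFn_Phi (μ := μ) f K hK hf0 hf1 (U t), Lp.coeFn_smul L (U t),
      h1, hm] with x k1 k2 k3 k4 k5
    show (D t : ℝ → ℝ) x = _
    rw [hD]
    rw [k1, Pi.sub_apply, k2, k3, Pi.smul_apply, smul_eq_mul]
    rw [phiCore, k5, k4]
    rw [hL]
    ring
  have hUc : Continuous U := by
    rw [hU]
    exact (Real.continuous_exp.comp (continuous_const.mul
      (continuous_id.max continuous_const))).smul w.continuous
  have hDc : Continuous D := by
    rw [hD]
    exact ((Phi_continuous (μ := μ) f K hK hf0 hf1).comp hUc).sub (hUc.const_smul L)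
  have hU0 : U 0 = u₀ := by
    have h1 := key 0
    rw [max_self] at h1
    rw [h1]
    have h2 : P 0 = 0 := by rw [hP]; exact intervalIntegral.integral_same
    rw [h2]
    simp
  exact ⟨U, ⟨D, hDc.continuousOn, hUderiv, heqn⟩, hU0, hinv⟩

end
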